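/- Let X be a separable, complete Heine-Borel metric space (i.e., every closed bounded subset of X is compact), let (ν_n) be a sequence of finite Borel measures on X and ν a finite Borel measure on X. Then (ν_n) converges vaguely to ν if and only if ∫_X f dν_n → ∫_X f dν for every bounded Borel-measurable function f : X → ℝ with bounded support such that the set of points at which f is discontinuous has ν-measure zero. -/

import Mathlib

open MeasureTheory Filter Topology Metric Bornology
open scoped ENNReal NNReal

section Aux

variable {X : Type*} [MetricSpace X] [MeasurableSpace X] [BorelSpace X] [ProperSpace X]

/-- Integrability of bounded measurable functions w.r.t. finite measures. -/
lemma aux_integrable {f : X → ℝ} (hf : Measurable f) {C : ℝ} (hC : ∀ x, |f x| ≤ C)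
    (m : Measure X) [IsFiniteMeasure m] : Integrable f m :=
  (integrable_const C).mono' hf.aestronglyMeasurable
    (ae_of_all _ fun x => (Real.norm_eq_abs _).le.trans (hC x))

variable (ν : ℕ → Measure X) (μ : Measure X) [∀ n, IsFiniteMeasure (ν n)] [IsFiniteMeasure μ]
  (H : ∀ f : X → ℝ, Continuous f → HasCompactSupport f →
      Tendsto (fun n => ∫ x, f x ∂(ν n)) atTop (𝓝 (∫ x, f x ∂μ)))

include H in
lemma aux_limsup_closed {F : Set X} (hFc : IsClosed F) (hFb : IsBounded F) :
    atTop.limsup (fun n => ν n F) ≤ μ F := by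
  rw [F.measure_eq_iInf_isOpen]
  refine le_iInf fun U => le_iInf fun hFU => le_iInf fun hUo => ?_
  have hFcomp : IsCompact F := isCompact_of_isClosed_isBounded hFc hFb
  obtain ⟨g, hg1, hg0, hgsupp, hg01⟩ := exists_continuous_one_zero_of_isCompact hFcomp
    hUo.isClosed_compl (Set.disjoint_compl_right_iff_subset.mpr hFU)
  have hgint : ∀ (m : Measure X) [IsFiniteMeasure m], Integrable g m := fun m _ =>
    g.continuous.integrable_of_hasCompactSupport hgsupp
  have key : ∀ n, ν n F ≤ ENNReal.ofReal (∫ x, g x ∂(ν n)) := by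
    intro n
    have h1 : (ν n F).toReal ≤ ∫ x, g x ∂(ν n) := by
      rw [← measureReal_def, ← integral_indicator_one hFc.measurableSet]
      refine integral_mono ((integrable_indicator_iff hFc.measurableSet).mpr
        (integrableOn_const)) (hgint _) fun x => ?_
      by_cases hx : x ∈ F
      · simp [Set.indicator_of_mem hx, hg1 hx]
      · simpa [Set.indicator_of_notMem hx] using (hg01 x).1
    calc ν n F = ENNReal.ofReal (ν n F).toReal :=
          (ENNReal.ofReal_toReal (measure_ne_top _ _)).symm
      _ ≤ _ := ENNReal.ofReal_le_ofReal h1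
  have lim1 : Tendsto (fun n => ENNReal.ofReal (∫ x, g x ∂(ν n))) atTop
      (𝓝 (ENNReal.ofReal (∫ x, g x ∂μ))) :=
    (ENNReal.continuous_ofReal.tendsto _).comp (H g g.continuous hgsupp)
  have h2 : ∫ x, g x ∂μ ≤ (μ U).toReal := by
    rw [← measureReal_def, ← integral_indicator_one hUo.measurableSet]
    refine integral_mono (hgint _) ((integrable_indicator_iff hUo.measurableSet).mpr
      (integrableOn_const)) fun x => ?_
    by_cases hx : x ∈ U
    · simpa [Set.indicator_of_mem hx] using (hg01 x).2
    · simpa [Set.indicator_of_notMem hx] using le_of_eq (hg0 hx)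
  calc atTop.limsup (fun n => ν n F)
      ≤ atTop.limsup (fun n => ENNReal.ofReal (∫ x, g x ∂(ν n))) :=
        limsup_le_limsup (Eventually.of_forall key)
    _ = ENNReal.ofReal (∫ x, g x ∂μ) := lim1.limsup_eq
    _ ≤ ENNReal.ofReal (μ U).toReal := ENNReal.ofReal_le_ofReal h2
    _ ≤ μ U := ENNReal.ofReal_toReal_le

include H in
lemma aux_liminf_open {G : Set X} (hGo : IsOpen G) (hGb : IsBounded G) :
    μ G ≤ atTop.liminf (fun n => ν n G) := by
  refine ENNReal.le_of_forall_pos_le_add fun ε hε hfin => ?_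
  obtain ⟨F, hFG, hFc, hμF⟩ := hGo.measurableSet.exists_isClosed_lt_add
    (measure_ne_top μ G) (ENNReal.coe_ne_zero.mpr hε.ne')
  have hFcomp : IsCompact F := isCompact_of_isClosed_isBounded hFc (hGb.subset hFG)
  obtain ⟨g, hg1, hg0, hgsupp, hg01⟩ := exists_continuous_one_zero_of_isCompact hFcomp
    hGo.isClosed_compl (Set.disjoint_compl_right_iff_subset.mpr hFG)
  have hgint : ∀ (m : Measure X) [IsFiniteMeasure m], Integrable g m := fun m _ =>
    g.continuous.integrable_of_hasCompactSupport hgsupp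
  have key : ∀ n, ENNReal.ofReal (∫ x, g x ∂(ν n)) ≤ ν n G := by
    intro n
    have h1 : ∫ x, g x ∂(ν n) ≤ (ν n G).toReal := by
      rw [← measureReal_def, ← integral_indicator_one hGo.measurableSet]
      refine integral_mono (hgint _) ((integrable_indicator_iff hGo.measurableSet).mpr
        (integrableOn_const)) fun x => ?_
      by_cases hx : x ∈ G
      · simpa [Set.indicator_of_mem hx] using (hg01 x).2
      · simpa [Set.indicator_of_notMem hx] using le_of_eq (hg0 hx)
    exact (ENNReal.ofReal_le_ofReal h1).trans ENNReal.ofReal_toReal_le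
  have h2 : μ F ≤ ENNReal.ofReal (∫ x, g x ∂μ) := by
    have h1 : (μ F).toReal ≤ ∫ x, g x ∂μ := by
      rw [← measureReal_def, ← integral_indicator_one hFc.measurableSet]
      refine integral_mono ((integrable_indicator_iff hFc.measurableSet).mpr
        (integrableOn_const)) (hgint _) fun x => ?_
      by_cases hx : x ∈ F
      · simp [Set.indicator_of_mem hx, hg1 hx]
      · simpa [Set.indicator_of_notMem hx] using (hg01 x).1
    calc μ F = ENNReal.ofReal (μ F).toReal := (ENNReal.ofReal_toReal (measure_ne_top _ _)).symm
      _ ≤ _ := ENNReal.ofReal_le_ofReal h1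
  have lim1 : Tendsto (fun n => ENNReal.ofReal (∫ x, g x ∂(ν n))) atTop
      (𝓝 (ENNReal.ofReal (∫ x, g x ∂μ))) :=
    (ENNReal.continuous_ofReal.tendsto _).comp (H g g.continuous hgsupp)
  calc μ G ≤ μ F + ε := hμF.le
    _ ≤ ENNReal.ofReal (∫ x, g x ∂μ) + ε := add_le_add_left h2 _
    _ = atTop.liminf (fun n => ENNReal.ofReal (∫ x, g x ∂(ν n))) + ε := by rw [lim1.liminf_eq]
    _ ≤ atTop.liminf (fun n => ν n G) + ε :=
        add_le_add_left (liminf_le_liminf (Eventually.of_forall key)) _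

include H in
lemma aux_tendsto_sets {E : Set X} (hEb : IsBounded E) (hE0 : μ (frontier E) = 0) :
    Tendsto (fun n => ν n E) atTop (𝓝 (μ E)) := by
  refine tendsto_measure_of_le_liminf_measure_of_limsup_measure_le interior_subset subset_closure
    hE0 ?_ ?_
  · exact aux_liminf_open ν μ H isOpen_interior ((hEb.subset interior_subset))
  · exact aux_limsup_closed ν μ H isClosed_closure hEb.closure

set_option maxHeartbeats 1000000 in
include H in
lemma aux_nonneg {f : X → ℝ} (hf : Measurable f) {C : ℝ} (hfC : ∀ x, f x ≤ C)
    (hf0 : ∀ x, 0 ≤ f x) (hsupp : IsBounded (tsupport f))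
    (hdisc : μ {x | ¬ ContinuousAt f x} = 0) :
    Tendsto (fun n => ∫ x, f x ∂(ν n)) atTop (𝓝 (∫ x, f x ∂μ)) := by
  have habs : ∀ x, |f x| ≤ max C 0 := fun x => by
    rw [abs_of_nonneg (hf0 x)]; exact le_max_of_le_left (hfC x)
  have lc : ∀ (m : Measure X) [IsFiniteMeasure m],
      ∫ x, f x ∂m = ∫ t in Set.Ioi (0 : ℝ), (m {a | t < f a}).toReal := fun m _ =>
    (aux_integrable hf habs m).integral_eq_integral_meas_lt (ae_of_all _ hf0)
  -- uniform bound on the measures of the supports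
  set K := Metric.cthickening 1 (tsupport f) with hKdef
  have hKc : IsClosed K := Metric.isClosed_cthickening
  have hKb : IsBounded K := hsupp.cthickening
  have hlimsup := aux_limsup_closed ν μ H hKc hKb
  have hev : ∀ᶠ n in atTop, ν n K < μ K + 1 :=
    eventually_lt_of_limsup_lt (lt_of_le_of_lt hlimsup
      (ENNReal.lt_add_right (measure_ne_top _ _) one_ne_zero))
  obtain ⟨N, hN⟩ := eventually_atTop.mp hev
  set M : ℝ≥0∞ := (μ K + 1) + ∑ n ∈ Finset.range N, ν n K with hMdef
  have hMtop : M ≠ ⊤ := by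
    refine ENNReal.add_ne_top.2 ⟨?_, ?_⟩
    · exact ENNReal.add_ne_top.2 ⟨measure_ne_top _ _, ENNReal.one_ne_top⟩
    · exact (ENNReal.sum_lt_top.mpr fun n _ => measure_lt_top _ _).ne
  have hM : ∀ n, ν n K ≤ M := by
    intro n
    rcases lt_or_ge n N with hn | hn
    · exact le_trans (Finset.single_le_sum (f := fun n => ν n K)
        (fun i _ => zero_le) (Finset.mem_range.mpr hn)) le_add_self
    · exact le_trans (hN n hn).le le_self_add
  have hEK : ∀ t : ℝ, 0 < t → {a | t < f a} ⊆ K := by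
    intro t ht a ha
    exact Metric.self_subset_cthickening _ (subset_tsupport f (ne_of_gt (lt_trans ht ha)))
  set bound : ℝ → ℝ := Set.indicator (Set.Ioc 0 C) (fun _ => M.toReal) with hbdef
  have hbound : Integrable bound (volume.restrict (Set.Ioi 0)) := by
    rw [hbdef, integrable_indicator_iff measurableSet_Ioc]
    exact integrableOn_const
      (lt_of_le_of_lt (Measure.restrict_apply_le _ _) measure_Ioc_lt_top).ne
  have hmeas : ∀ n, AEStronglyMeasurable (fun t => (ν n {a | t < f a}).toReal)
      (volume.restrict (Set.Ioi 0)) := by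
    intro n
    have h1 : Antitone (fun t : ℝ => ν n {a | t < f a}) :=
      fun s t hst => measure_mono fun a ha => lt_of_le_of_lt hst ha
    exact (h1.measurable.ennreal_toReal).aestronglyMeasurable
  have hb : ∀ n, ∀ᵐ t ∂(volume.restrict (Set.Ioi 0)),
      ‖(ν n {a | t < f a}).toReal‖ ≤ bound t := by
    intro n
    filter_upwards [ae_restrict_mem measurableSet_Ioi] with t ht
    rw [Real.norm_eq_abs, abs_of_nonneg ENNReal.toReal_nonneg]
    by_cases htC : t ≤ C
    · have hbt : bound t = M.toReal := by
        rw [hbdef, Set.indicator_of_mem (Set.mem_Ioc.mpr ⟨ht, htC⟩)]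
      rw [hbt]
      exact ENNReal.toReal_mono hMtop (le_trans (measure_mono (hEK t ht)) (hM n))
    · have hempty : {a | t < f a} = ∅ := by
        ext a; simp only [Set.mem_setOf_eq, Set.mem_empty_iff_false, iff_false, not_lt]
        exact (hfC a).trans (le_of_not_ge htC)
      rw [hempty]
      simp only [measure_empty, ENNReal.toReal_zero]
      exact Set.indicator_nonneg (fun _ _ => ENNReal.toReal_nonneg) t
  have hS : Set.Countable {t : ℝ | 0 < μ {a | f a = t}} :=
    Measure.countable_meas_level_set_pos hf
  have hSae : ∀ᵐ t ∂(volume : Measure ℝ), t ∉ {t : ℝ | 0 < μ {a | f a = t}} :=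
    measure_eq_zero_iff_ae_notMem.mp (hS.measure_zero volume)
  have hconv : ∀ᵐ t ∂(volume.restrict (Set.Ioi 0)),
      Tendsto (fun n => (ν n {a | t < f a}).toReal) atTop (𝓝 ((μ {a | t < f a}).toReal)) := by
    filter_upwards [ae_restrict_mem measurableSet_Ioi, ae_restrict_of_ae hSae] with t ht htS
    have hlevel : μ {a | f a = t} = 0 := by
      by_contra hcon
      exact htS (pos_iff_ne_zero.mpr hcon)
    have hfr : μ (frontier {a | t < f a}) = 0 := by
      refine measure_mono_null (fun x hx => ?_) (measure_union_null hdisc hlevel)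
      by_cases hc : ContinuousAt f x
      · right
        by_contra hne
        rcases lt_or_gt_of_ne (fun h => hne h) with hlt | hgt
        · -- f x < t : x has a neighborhood inside the complement, contradicting closure
          have hnb : f ⁻¹' (Set.Iio t) ∈ 𝓝 x := hc.preimage_mem_nhds (Iio_mem_nhds hlt)
          obtain ⟨y, hy1, hy2⟩ := (mem_closure_iff_nhds.mp hx.1 _ hnb)
          exact absurd hy2 (not_lt_of_gt (by simpa using hy1) ∘ fun h => h)
        · -- t < f x : x is in the interior
          have hnb : f ⁻¹' (Set.Ioi t) ∈ 𝓝 x := hc.preimage_mem_nhds (Ioi_mem_nhds hgt)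
          exact hx.2 (mem_interior_iff_mem_nhds.mpr hnb)
      · exact Or.inl hc
    have := aux_tendsto_sets ν μ H (hKb.subset (hEK t ht)) hfr
    · exact (ENNReal.tendsto_toReal (measure_ne_top μ _)).comp this
  have final := tendsto_integral_of_dominated_convergence bound hmeas hbound hb hconv
  rw [lc μ]
  exact final.congr fun n => (lc (ν n)).symm

end Aux

/-- Vague convergence on a separable complete Heine-Borel metric space is equivalent to
convergence of integrals of bounded measurable boundedly supported ν-a.e. continuous
functions. -/
theorem stmt4 {X : Type*} [MetricSpace X] [TopologicalSpace.SeparableSpace X] [CompleteSpace X]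
    [MeasurableSpace X] [BorelSpace X]
    (hHB : ∀ s : Set X, IsClosed s → Bornology.IsBounded s → IsCompact s)
    (ν : ℕ → Measure X) (μ : Measure X)
    (hν : ∀ n, IsFiniteMeasure (ν n)) (hμ : IsFiniteMeasure μ) :
    (∀ f : X → ℝ, Continuous f → HasCompactSupport f →
        Tendsto (fun n => ∫ x, f x ∂(ν n)) atTop (𝓝 (∫ x, f x ∂μ)))
      ↔
    (∀ f : X → ℝ, Measurable f → (∃ C : ℝ, ∀ x, |f x| ≤ C) →
        Bornology.IsBounded (tsupport f) →
        μ {x : X | ¬ ContinuousAt f x} = 0 →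
        Tendsto (fun n => ∫ x, f x ∂(ν n)) atTop (𝓝 (∫ x, f x ∂μ))) := by
  haveI : ∀ n, IsFiniteMeasure (ν n) := hν
  haveI := hμ
  haveI : ProperSpace X :=
    ⟨fun x r => hHB _ Metric.isClosed_closedBall isBounded_closedBall⟩
  constructor
  · rintro H f hf ⟨C, hC⟩ hsupp hdisc
    -- split into positive and negative parts
    set fp : X → ℝ := fun x => max (f x) 0 with hfp
    set fm : X → ℝ := fun x => max (-f x) 0 with hfm
    have hfpm : Measurable fp := hf.max measurable_const
    have hfmm : Measurable fm := hf.neg.max measurable_const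
    have hfpC : ∀ x, fp x ≤ max C 0 := fun x =>
      max_le_max ((le_abs_self _).trans (hC x)) le_rfl
    have hfmC : ∀ x, fm x ≤ max C 0 := fun x =>
      max_le_max ((neg_le_abs _).trans (hC x)) le_rfl
    have hfp0 : ∀ x, 0 ≤ fp x := fun x => le_max_right _ _
    have hfm0 : ∀ x, 0 ≤ fm x := fun x => le_max_right _ _
    have hsp : tsupport fp ⊆ tsupport f := closure_mono fun x hx => by
      simp only [hfp, Function.mem_support, ne_eq] at hx ⊢
      intro h; apply hx; simp [h]
    have hsm : tsupport fm ⊆ tsupport f := closure_mono fun x hx => by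
      simp only [hfm, Function.mem_support, ne_eq] at hx ⊢
      intro h; apply hx; simp [h]
    have hdp : μ {x | ¬ ContinuousAt fp x} = 0 := by
      refine measure_mono_null ?_ hdisc
      intro x hx
      simp only [Set.mem_setOf_eq] at hx ⊢
      exact fun hcf => hx (hcf.max continuousAt_const)
    have hdm : μ {x | ¬ ContinuousAt fm x} = 0 := by
      refine measure_mono_null ?_ hdisc
      intro x hx
      simp only [Set.mem_setOf_eq] at hx ⊢
      exact fun hcf => hx (hcf.neg.max continuousAt_const)
    have hTp := aux_nonneg ν μ H hfpm hfpC hfp0 (hsupp.subset hsp) hdp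
    have hTm := aux_nonneg ν μ H hfmm hfmC hfm0 (hsupp.subset hsm) hdm
    have hsub : ∀ (m : Measure X) [IsFiniteMeasure m],
        ∫ x, f x ∂m = (∫ x, fp x ∂m) - ∫ x, fm x ∂m := by
      intro m _
      rw [← integral_sub
        (aux_integrable hfpm (fun x => by
          rw [abs_of_nonneg (hfp0 x)]; exact hfpC x) m)
        (aux_integrable hfmm (fun x => by
          rw [abs_of_nonneg (hfm0 x)]; exact hfmC x) m)]
      congr 1
      ext x
      exact (max_zero_sub_max_neg_zero_eq_self (f x)).symm
    have := hTp.sub hTm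
    rw [hsub μ]
    exact this.congr fun n => (hsub (ν n)).symm
  · intro H f hfc hfs
    refine H f hfc.measurable ?_ hfs.isBounded ?_
    · obtain ⟨C, hC⟩ := hfc.bounded_above_of_compact_support hfs
      exact ⟨C, fun x => by simpa [Real.norm_eq_abs] using hC x⟩
    · have : {x : X | ¬ ContinuousAt f x} = ∅ :=
        Set.eq_empty_iff_forall_notMem.2 fun x hx => hx hfc.continuousAt
      simp [this]
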